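/- For positive integers s, p and any integer k: \sum_{\nu=0}^{p} \binom{p}{\nu} \binom{p-\nu+2}{s} B_{\nu}^{(k)}/(p-\nu+2) = \binom{p+1}{s} B_{p-s+1}^{(k)}(1)/(p+1) + ((s-1)/(p+1)) \binom{p+2}{s} B_{p-s+2}^{(k)}(1)/(p+2). -/

import Mathlib

noncomputable section

/-- Signed Stirling numbers of the first kind. -/
def stirling1 : ℕ → ℕ → ℤ
  | 0, 0 => 1
  | 0, _ + 1 => 0
  | _ + 1, 0 => 0
  | n + 1, m + 1 => stirling1 n m - n * stirling1 n (m + 1)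

/-- `n!`-normalized coefficients of `Ei_k (log (1+t))`. -/
def polyExpCoeff (k : ℤ) (n : ℕ) : ℚ :=
  ∑ m ∈ Finset.Icc 1 n, (stirling1 n m : ℚ) / (m : ℚ) ^ (k - 1)

/-- Type 2 poly-Bernoulli numbers of index `k`, defined by the recursion coming from the
generating function `Ei_k (log (1+t)) / (e^t - 1) = ∑ B_n^{(k)} t^n/n!`. -/
def polyBernoulli (k : ℤ) : ℕ → ℚ
  | n =>
    (polyExpCoeff k (n + 1) -
      ∑ l ∈ (Finset.range n).attach, ((n + 1).choose l.1 : ℚ) * polyBernoulli k l.1) / (n + 1)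
  termination_by n => n
  decreasing_by exact Finset.mem_range.mp l.2

/-- Type 2 poly-Bernoulli polynomials of index `k`, as functions on `ℝ`. -/
def polyBernoulliPoly (k : ℤ) (n : ℕ) (x : ℝ) : ℝ :=
  ∑ l ∈ Finset.range (n + 1), (n.choose l : ℝ) * (polyBernoulli k l : ℝ) * x ^ (n - l)

/-- Bernoulli polynomials as functions on `ℝ`. -/
def bernoulliPolyFun (n : ℕ) (x : ℝ) : ℝ :=
  ∑ l ∈ Finset.range (n + 1), (n.choose l : ℝ) * (bernoulli l : ℝ) * x ^ (n - l)

/-- Bernoulli functions `B̄_n(x) = B_n(⟨x⟩)`. -/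
def bernoulliBar (n : ℕ) (x : ℝ) : ℝ := bernoulliPolyFun n (Int.fract x)

/-- Type 2 poly-Bernoulli functions `B̄_n^{(k)}(x) = B_n^{(k)}(⟨x⟩)`. -/
def polyBernoulliBar (k : ℤ) (n : ℕ) (x : ℝ) : ℝ := polyBernoulliPoly k n (Int.fract x)

/-- Poly-Dedekind sums `S_p^{(k)}(h,m)`. -/
def polyDedekindSum (k : ℤ) (p h m : ℕ) : ℝ :=
  ∑ μ ∈ Finset.Ico 1 m, (μ / m : ℝ) * polyBernoulliBar k p (h * μ / m)

/-- Apostol's generalized Dedekind sums `S_p(h,m)`. -/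
def genDedekindSum (p h m : ℕ) : ℝ :=
  ∑ μ ∈ Finset.Ico 1 m, (μ / m : ℝ) * bernoulliBar p (h * μ / m)

/-- The polyexponential function `Ei_k`. -/
def polyExp (k : ℤ) (x : ℝ) : ℝ :=
  ∑' n : ℕ, x ^ (n + 1) / ((n + 1 : ℝ) ^ k * (Nat.factorial n : ℝ))

/-- The sawtooth function `((x))`. -/
def sawtooth (x : ℝ) : ℝ := if Int.fract x = 0 then 0 else Int.fract x - 1 / 2

end

lemma trinom (n k m : ℕ) : n.choose k * (n - k).choose m = n.choose m * (n - m).choose k := by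
  rcases le_or_gt (k + m) n with h | h
  · have h1 := Nat.choose_mul (n := n) (Nat.le_add_right k m)
    have h2 := Nat.choose_mul (n := n) (Nat.le_add_left m k)
    simp only [Nat.add_sub_cancel_left, Nat.add_sub_cancel] at h1 h2
    have hsym : (k + m).choose k = (k + m).choose m := by
      simpa using (Nat.choose_symm_add : (k+m).choose k = (k+m).choose m)
    rw [← h1, ← h2, hsym]
  · have z1 : n.choose k * (n - k).choose m = 0 := by
      rcases le_or_gt k n with hk | hk
      · have : n - k < m := by omega
        rw [Nat.choose_eq_zero_of_lt this, mul_zero]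
      · rw [Nat.choose_eq_zero_of_lt hk, zero_mul]
    have z2 : n.choose m * (n - m).choose k = 0 := by
      rcases le_or_gt m n with hm | hm
      · have : n - m < k := by omega
        rw [Nat.choose_eq_zero_of_lt this, mul_zero]
      · rw [Nat.choose_eq_zero_of_lt hm, zero_mul]
    rw [z1, z2]

lemma middle (p ν u : ℕ) :
    p.choose ν * (p - ν + 1).choose (u + 1) =
      p.choose (u + 1) * (p - (u + 1)).choose ν + p.choose u * (p - u).choose ν := by
  rw [Nat.choose_succ_succ, Nat.mul_add, trinom p ν (u+1), trinom p ν u, Nat.add_comm]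

lemma clearedN (p ν s : ℕ) (hs : 1 ≤ s) :
    p.choose ν * (p - ν + 2).choose s * ((p + 1) * (p + 2)) =
      (p + 1).choose s * (p + 1 - s).choose ν * ((p - ν + 2) * (p + 2)) +
        (s - 1) * ((p + 2).choose s * (p + 2 - s).choose ν * (p - ν + 2)) := by
  obtain ⟨t, rfl⟩ : ∃ t, s = t + 1 := ⟨s - 1, by omega⟩
  cases t with
  | zero =>
    simp [Nat.choose_one_right, Nat.add_sub_cancel]
    ring
  | succ u =>
    have h1 : p + 1 - (u + 2) = p - (u + 1) := by omega
    have h2 : p + 2 - (u + 2) = p - u := by omega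
    have h3 : u + 2 - 1 = u + 1 := by omega
    rw [h1, h2, h3]
    apply Nat.eq_of_mul_eq_mul_left (show 0 < u + 2 by omega)
    have e1 := Nat.add_one_mul_choose_eq (p - ν + 1) (u + 1)
    have e2 := Nat.add_one_mul_choose_eq p (u + 1)
    have e3 := Nat.add_one_mul_choose_eq (p + 1) (u + 1)
    have e4 := Nat.add_one_mul_choose_eq p u
    have m := middle p ν u
    zify at e1 e2 e3 e4 m ⊢
    linear_combination
      (-((p.choose ν : ℤ) * ((p : ℤ) + 1) * ((p : ℤ) + 2))) * e1 +
      ((((p - ν : ℕ) : ℤ) + 2) * ((p : ℤ) + 1) * ((p : ℤ) + 2)) * m +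
      (((p - (u + 1)).choose ν : ℤ) * (((p - ν : ℕ) : ℤ) + 2) * ((p : ℤ) + 2)) * e2 +
      (((u : ℤ) + 1) * ((p - u).choose ν : ℤ) * (((p - ν : ℕ) : ℤ) + 2)) * e3 +
      (((p : ℤ) + 2) * ((p - u).choose ν : ℤ) * (((p - ν : ℕ) : ℤ) + 2)) * e4

lemma coeffR (p ν s : ℕ) (hs : 0 < s) :
    (p.choose ν : ℝ) * ((p - ν + 2).choose s : ℝ) / ((p - ν : ℕ) + 2) =
      ((p + 1).choose s : ℝ) * ((p + 1 - s).choose ν : ℝ) / (p + 1) +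
        ((s : ℝ) - 1) / (p + 1) * ((p + 2).choose s : ℝ) * ((p + 2 - s).choose ν : ℝ) / (p + 2) := by
  have h := clearedN p ν s hs
  have h' : (p.choose ν : ℝ) * ((p - ν + 2).choose s : ℝ) * (((p : ℝ) + 1) * ((p : ℝ) + 2)) =
      ((p + 1).choose s : ℝ) * ((p + 1 - s).choose ν : ℝ) *
          ((((p - ν : ℕ) : ℝ) + 2) * ((p : ℝ) + 2)) +
        ((s : ℝ) - 1) *
          (((p + 2).choose s : ℝ) * ((p + 2 - s).choose ν : ℝ) * (((p - ν : ℕ) : ℝ) + 2)) := by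
    have := congrArg (Nat.cast : ℕ → ℝ) h
    push_cast [Nat.cast_sub hs] at this
    linarith [this]
  have d1 : (((p - ν : ℕ) : ℝ) + 2) ≠ 0 := by positivity
  have d2 : ((p : ℝ) + 1) ≠ 0 := by positivity
  have d3 : ((p : ℝ) + 2) ≠ 0 := by positivity
  field_simp
  linear_combination h'

lemma poly_at_one (k : ℤ) (n N : ℕ) (hn : n + 1 ≤ N) :
    polyBernoulliPoly k n 1 =
      ∑ ν ∈ Finset.range N, (n.choose ν : ℝ) * (polyBernoulli k ν : ℝ) := by
  rw [polyBernoulliPoly]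
  simp only [one_pow, mul_one]
  apply Finset.sum_subset
  · exact Finset.range_subset_range.2 hn
  · intro x _ hx
    rw [Nat.choose_eq_zero_of_lt (by simpa using hx)]
    simp

/-- Identity relating poly-Bernoulli numbers and the values `B^{(k)}(1)`. -/
theorem polyBernoulli_identity1 (s p : ℕ) (hs : 0 < s) (hp : 0 < p) (k : ℤ) :
    ∑ ν ∈ Finset.range (p + 1),
        (p.choose ν : ℝ) * ((p - ν + 2).choose s : ℝ) * (polyBernoulli k ν : ℝ) /
          ((p - ν : ℕ) + 2) =
      ((p + 1).choose s : ℝ) * polyBernoulliPoly k (p + 1 - s) 1 / (p + 1) +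
        ((s : ℝ) - 1) / (p + 1) * ((p + 2).choose s : ℝ) *
          polyBernoulliPoly k (p + 2 - s) 1 / (p + 2) := by
  rw [poly_at_one k (p + 1 - s) (p + 2) (by omega), poly_at_one k (p + 2 - s) (p + 2) (by omega)]
  have hL : ∑ ν ∈ Finset.range (p + 1),
        (p.choose ν : ℝ) * ((p - ν + 2).choose s : ℝ) * (polyBernoulli k ν : ℝ) /
          ((p - ν : ℕ) + 2) =
      ∑ ν ∈ Finset.range (p + 2),
        (p.choose ν : ℝ) * ((p - ν + 2).choose s : ℝ) * (polyBernoulli k ν : ℝ) /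
          ((p - ν : ℕ) + 2) := by
    apply Finset.sum_subset (Finset.range_subset_range.2 (by omega))
    intro x _ hx
    rw [Nat.choose_eq_zero_of_lt (by simpa using hx)]
    simp
  rw [hL, Finset.mul_sum, Finset.sum_div, Finset.mul_sum, Finset.sum_div,
    ← Finset.sum_add_distrib]
  refine Finset.sum_congr rfl fun ν _ => ?_
  have h := coeffR p ν s hs
  linear_combination (polyBernoulli k ν : ℝ) * h
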